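/- For every x > 0 one has ∫₀ˣ g'(f(t))/t dt = ln(f(x)) − (1/2)·ln(f(x)² − 1); equivalently, exp(∫₀ˣ g'(f(t))/t dt) = f(x)/√(f(x)²−1). -/

import Mathlib

open Real Set MeasureTheory

noncomputable def hAux (y : ℝ) : ℝ := Real.sqrt (y^2 - 1) - Real.arccos (1/y)

lemma sq1pos {y : ℝ} (hy : 1 < y) : 0 < y^2 - 1 := by nlinarith

lemma spos {y : ℝ} (hy : 1 < y) : 0 < Real.sqrt (y^2-1) := Real.sqrt_pos.2 (sq1pos hy)

lemma ssq {y : ℝ} (hy : 1 < y) : (Real.sqrt (y^2-1))^2 = y^2 - 1 :=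
  Real.sq_sqrt (sq1pos hy).le

lemma sqrt_one_sub {y : ℝ} (hy : 0 < y) :
    Real.sqrt (1 - 1/y^2) = Real.sqrt (y^2-1) / y := by
  rw [show 1 - 1/y^2 = (y^2-1)/y^2 by field_simp, Real.sqrt_div' _ (by positivity),
    Real.sqrt_sq hy.le]

lemma arccos_inv_hasDerivAt {y : ℝ} (hy : 1 < y) :
    HasDerivAt (fun y : ℝ => Real.arccos (1/y)) (1/(y * Real.sqrt (y^2-1))) y := by
  have hy0 : (0:ℝ) < y := by linarith
  have h1 : HasDerivAt (fun y : ℝ => 1/y) (-(1/y^2)) y := by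
    have := (hasDerivAt_id y).inv (show y ≠ 0 by positivity)
    convert this using 1 <;> [rfl; rfl; (ext z; simp); (simp only [id]; field_simp)]
  have hlt : (0:ℝ) < 1/y := by positivity
  have hlt2 : 1/y < 1 := by rw [div_lt_one hy0]; exact hy
  have h2 : HasDerivAt Real.arccos (-(1 / Real.sqrt (1 - (1/y)^2))) (1/y) :=
    Real.hasDerivAt_arccos (by linarith) hlt2.ne
  have := h2.comp y h1
  convert this using 1
  rfl
  rfl
  rfl
  rw [show 1 - (1/y)^2 = 1 - 1/y^2 by ring, sqrt_one_sub hy0]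
  have hs := spos hy
  field_simp

lemma sqrt_sub_hasDerivAt {y : ℝ} (hy : 1 < y) :
    HasDerivAt (fun y : ℝ => Real.sqrt (y^2-1)) (y / Real.sqrt (y^2-1)) y := by
  have h1 : HasDerivAt (fun y : ℝ => y^2-1) (2*y) y := by
    simpa using ((hasDerivAt_pow 2 y).sub_const 1)
  have := (Real.hasDerivAt_sqrt (sq1pos hy).ne').comp y h1
  convert this using 1
  rfl
  rfl
  rfl
  have hs := spos hy
  field_simp

lemma hAux_hasDerivAt {y : ℝ} (hy : 1 < y) :
    HasDerivAt hAux (Real.sqrt (y^2-1) / y) y := by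
  have := (sqrt_sub_hasDerivAt hy).sub (arccos_inv_hasDerivAt hy)
  convert this using 1
  rfl
  rfl
  rfl
  have hs := spos hy
  have h2 := ssq hy
  have hy0 : (0:ℝ) < y := by linarith
  field_simp
  nlinarith [ssq hy, spos hy, mul_pos hy0 hs, sq_nonneg (y - Real.sqrt (y^2-1))]

lemma hAux_cont : ContinuousOn hAux (Ici 1) := by
  apply ContinuousOn.sub
  · exact (Real.continuous_sqrt.comp (by continuity)).continuousOn
  · exact Real.continuous_arccos.comp_continuousOn
      (continuousOn_const.div continuousOn_id (fun y hy => by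
        simp only [mem_Ici] at hy; intro h; simp [h] at hy; linarith))

lemma hAux_strictMono : StrictMonoOn hAux (Ici 1) := by
  apply strictMonoOn_of_hasDerivWithinAt_pos (convex_Ici 1) hAux_cont
    (f' := fun y => Real.sqrt (y^2-1) / y)
  · intro y hy
    rw [interior_Ici] at hy
    exact (hAux_hasDerivAt hy).hasDerivWithinAt
  · intro y hy
    rw [interior_Ici] at hy
    exact div_pos (spos hy) (by simp only [mem_Ioi] at hy; linarith)

lemma hAux_pos {y : ℝ} (hy : 1 < y) : 0 < hAux y := by
  have h1 : hAux 1 = 0 := by norm_num [hAux]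
  have := hAux_strictMono (self_mem_Ici) (le_of_lt hy) hy
  rwa [h1] at this

/-- `g(t) = arccos(1/t) / √(1 − 1/t²)`. -/
noncomputable def gFun (t : ℝ) : ℝ := Real.arccos (1/t) / Real.sqrt (1 - 1/t^2)

/-- The function `y ↦ π/(√(y²−1) − arccos(1/y))`, a strictly decreasing bijection
from `(1,∞)` onto `(0,∞)`. -/
noncomputable def sigmaF (y : ℝ) : ℝ :=
  Real.pi / (Real.sqrt (y^2 - 1) - Real.arccos (1/y))

lemma sigmaF_eq_pi_div (y : ℝ) : sigmaF y = Real.pi / hAux y := rfl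

lemma sigmaF_pos {y : ℝ} (hy : 1 < y) : 0 < sigmaF y :=
  div_pos Real.pi_pos (hAux_pos hy)

lemma sigmaF_hasDerivAt {y : ℝ} (hy : 1 < y) :
    HasDerivAt sigmaF (-(Real.pi * (Real.sqrt (y^2-1)/y)) / (hAux y)^2) y := by
  have h2 : sigmaF = fun y => Real.pi / hAux y := rfl
  rw [h2]
  have := (hasDerivAt_const y Real.pi).div (hAux_hasDerivAt hy) (hAux_pos hy).ne'
  convert this using 1
  rfl
  rfl
  rfl
  ring

lemma sigmaF_strictAnti : StrictAntiOn sigmaF (Ioi 1) := by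
  intro a ha b hb hab
  rw [sigmaF_eq_pi_div, sigmaF_eq_pi_div]
  exact div_lt_div_of_pos_left Real.pi_pos (hAux_pos ha)
    (hAux_strictMono (mem_Ici.2 (le_of_lt ha)) (mem_Ici.2 (le_of_lt hb)) hab)

lemma gFun'_hasDerivAt {y : ℝ} (hy : 1 < y) :
    HasDerivAt (fun t : ℝ => Real.arccos (1/t) / Real.sqrt (1 - 1/t^2))
      (hAux y / Real.sqrt (y^2-1)^3) y := by
  have hy0 : (0:ℝ) < y := lt_trans one_pos hy
  have hs := spos hy
  have hs2 := ssq hy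
  have hpos : (0:ℝ) < 1 - 1/y^2 := by
    rw [sub_pos, div_lt_one (by positivity)]; nlinarith
  have hd : HasDerivAt (fun y : ℝ => Real.sqrt (1 - 1/y^2))
      (1/(y^2 * Real.sqrt (y^2-1))) y := by
    have h1 : HasDerivAt (fun y : ℝ => 1 - 1/y^2) (2/y^3) y := by
      simp only [one_div]
      have := ((hasDerivAt_pow 2 y).inv (by positivity)).const_sub 1
      convert this using 1
      rfl
      rfl
      norm_num
      field_simp
      ring
    have := (Real.hasDerivAt_sqrt hpos.ne').comp y h1
    convert this using 1
    rfl
    rfl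
    rfl
    rw [sqrt_one_sub hy0]
    field_simp
  have hvne : Real.sqrt (1 - 1/y^2) ≠ 0 := by
    rw [sqrt_one_sub hy0]; positivity
  have := (arccos_inv_hasDerivAt hy).div hd hvne
  convert this using 1
  rfl
  rfl
  rfl
  rw [sqrt_one_sub hy0]
  unfold hAux
  have hA : Real.arccos (1/y) = Real.sqrt (y^2-1) - hAux y := by unfold hAux; ring
  field_simp

lemma gFun_hasDerivAt {y : ℝ} (hy : 1 < y) :
    HasDerivAt gFun (hAux y / Real.sqrt (y^2-1)^3) y := gFun'_hasDerivAt hy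

lemma deriv_gFun {y : ℝ} (hy : 1 < y) :
    deriv gFun y = hAux y / Real.sqrt (y^2-1)^3 := (gFun_hasDerivAt hy).deriv

theorem stmt_19 (x : ℝ) (hx : 0 < x)
    (f : ℝ → ℝ) (hf : ∀ t : ℝ, 0 < t → 1 < f t ∧ sigmaF (f t) = t) :
    (∫ t in (0:ℝ)..x, deriv gFun (f t) / t)
        = Real.log (f x) - (1/2) * Real.log ((f x)^2 - 1) ∧
    Real.exp (∫ t in (0:ℝ)..x, deriv gFun (f t) / t)
        = f x / Real.sqrt ((f x)^2 - 1) := by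
  have hf1 : ∀ t, 0 < t → 1 < f t := fun t ht => (hf t ht).1
  have hfσ : ∀ t, 0 < t → sigmaF (f t) = t := fun t ht => (hf t ht).2
  have hinj : InjOn sigmaF (Ioi 1) := sigmaF_strictAnti.injOn
  have hfinv : ∀ y : ℝ, 1 < y → f (sigmaF y) = y := by
    intro y hy
    have hpos := sigmaF_pos hy
    exact hinj (hf1 _ hpos) hy (hfσ _ hpos)
  have hanti : ∀ a b : ℝ, 0 < a → a < b → f b < f a := by
    intro a b ha hab
    have hb : 0 < b := ha.trans hab
    rcases lt_trichotomy (f b) (f a) with h | h | h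
    · exact h
    · exfalso
      have : b = a := by rw [← hfσ b hb, ← hfσ a ha, h]
      linarith
    · exfalso
      have := sigmaF_strictAnti (hf1 a ha) (hf1 b hb) h
      rw [hfσ a ha, hfσ b hb] at this
      linarith
  -- continuity of f on (0,∞)
  have hcont : ∀ t : ℝ, 0 < t → ContinuousAt f t := by
    intro t ht
    rw [Metric.continuousAt_iff]
    intro ε hε
    set y₀ := f t with hy₀
    have hy₀1 : 1 < y₀ := hf1 t ht
    set ε' : ℝ := min (ε/2) ((y₀ - 1)/2) with hε'
    have hε'pos : 0 < ε' := by
      apply lt_min (by linarith) (by linarith)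
    have h1 : 1 < y₀ - ε' := by
      have : ε' ≤ (y₀-1)/2 := min_le_right _ _
      linarith
    have h2 : 1 < y₀ + ε' := by linarith
    have hσ2 : sigmaF (y₀ + ε') < t := by
      have := sigmaF_strictAnti hy₀1 h2 (by linarith)
      rwa [hfσ t ht] at this
    have hσ1 : t < sigmaF (y₀ - ε') := by
      have := sigmaF_strictAnti h1 hy₀1 (by linarith)
      rwa [hfσ t ht] at this
    refine ⟨min (t - sigmaF (y₀ + ε')) (sigmaF (y₀ - ε') - t), by
      apply lt_min <;> linarith, ?_⟩
    intro s hs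
    rw [Real.dist_eq] at hs ⊢
    have hs1 : sigmaF (y₀ + ε') < s := by
      have := abs_lt.1 hs
      have h3 : min (t - sigmaF (y₀ + ε')) (sigmaF (y₀ - ε') - t) ≤ t - sigmaF (y₀ + ε') :=
        min_le_left _ _
      linarith [this.1]
    have hs2 : s < sigmaF (y₀ - ε') := by
      have := abs_lt.1 hs
      have h3 : min (t - sigmaF (y₀ + ε')) (sigmaF (y₀ - ε') - t) ≤ sigmaF (y₀ - ε') - t :=
        min_le_right _ _
      linarith [this.2]
    have hspos : 0 < s := lt_trans (sigmaF_pos h2) hs1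
    have hfs1 : f s < y₀ + ε' := by
      have := hanti _ _ (sigmaF_pos h2) hs1
      rwa [hfinv _ h2] at this
    have hfs2 : y₀ - ε' < f s := by
      have := hanti _ _ hspos hs2
      rwa [hfinv _ h1] at this
    have : ε' < ε := lt_of_le_of_lt (min_le_left _ _) (by linarith)
    rw [abs_lt]
    constructor <;> [linarith; linarith]
  -- derivative of f
  have hfd : ∀ t : ℝ, 0 < t → HasDerivAt f
      ((-(Real.pi * (Real.sqrt ((f t)^2-1)/(f t))) / (hAux (f t))^2)⁻¹) t := by
    intro t ht
    have hy := hf1 t ht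
    apply HasDerivAt.of_local_left_inverse (hcont t ht) (sigmaF_hasDerivAt hy)
    · apply div_ne_zero
      · apply neg_ne_zero.2
        apply mul_ne_zero Real.pi_ne_zero
        exact (div_pos (spos hy) (by linarith)).ne'
      · exact pow_ne_zero 2 (hAux_pos hy).ne'
    · filter_upwards [Ioi_mem_nhds ht] with s hs
      exact hfσ s hs
  -- f tends to infinity at 0+
  have hftop : Filter.Tendsto f (nhdsWithin 0 (Ioi 0)) Filter.atTop := by
    rw [Filter.tendsto_atTop]
    intro M
    have h2 : (1:ℝ) < max M 2 := lt_of_lt_of_le one_lt_two (le_max_right _ _)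
    have hσpos := sigmaF_pos h2
    filter_upwards [Ioo_mem_nhdsGT_of_mem (⟨le_refl 0, hσpos⟩ : (0:ℝ) ∈ Ico 0 (sigmaF (max M 2)))]
      with s hs
    have := hanti _ _ hs.1 hs.2
    rw [hfinv _ h2] at this
    exact le_trans (le_max_left M 2) this.le
  set F : ℝ → ℝ := fun t => if 0 < t then Real.log (f t) - (1/2) * Real.log ((f t)^2 - 1) else 0
    with hFdef
  have hFpos : ∀ t : ℝ, 0 < t → F t = Real.log (f t) - (1/2) * Real.log ((f t)^2 - 1) :=
    fun t ht => if_pos ht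
  have hFd : ∀ t ∈ Ioo (0:ℝ) x, HasDerivAt F (deriv gFun (f t) / t) t := by
    intro t ht
    obtain ⟨ht0, htx⟩ := ht
    have hy := hf1 t ht0
    have hy0 : (0:ℝ) < f t := by linarith
    have hs := spos hy
    have hs2 := ssq hy
    have hh := hAux_pos hy
    have hfd' := hfd t ht0
    set d := (-(Real.pi * (Real.sqrt ((f t)^2-1)/(f t))) / (hAux (f t))^2)⁻¹ with hd
    have h1 : HasDerivAt (fun u => Real.log (f u)) (d / f t) t := hfd'.log hy0.ne'
    have hq : HasDerivAt (fun u => (f u)^2 - 1) (2 * f t * d) t := by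
      have := (hfd'.pow 2).sub_const 1
      convert this using 1
      rfl
      rfl
      rfl
      push_cast
      ring
    have h2 : HasDerivAt (fun u => Real.log ((f u)^2 - 1)) ((2 * f t * d) / ((f t)^2 -1)) t :=
      hq.log (sq1pos hy).ne'
    have h3 := h1.sub (h2.const_mul (1/2 : ℝ))
    have hEF : F =ᶠ[nhds t] fun u => Real.log (f u) - (1/2) * Real.log ((f u)^2 - 1) := by
      filter_upwards [Ioi_mem_nhds ht0] with s hs
      exact hFpos s hs
    have h4 := HasDerivAt.congr_of_eventuallyEq h3 hEF
    convert h4 using 1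
    rfl
    rfl
    rw [deriv_gFun hy]
    set y := f t with hy_def
    have ht_eq : t = Real.pi / hAux y := by rw [← hfσ t ht0, sigmaF_eq_pi_div]
    have hd_eq : d = -(y * (hAux y)^2) / (Real.pi * Real.sqrt (y^2-1)) := by
      rw [hd]
      field_simp
    rw [ht_eq, hd_eq]
    have hπ := Real.pi_pos
    set s := Real.sqrt (y^2-1) with hs_def
    set h := hAux y with hh_def
    rw [← hs2]
    field_simp
    linear_combination hs2
  -- the rewriting identity
  have hFalt : ∀ t : ℝ, 0 < t → F t = -(1/2) * Real.log (1 - 1/(f t)^2) := by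
    intro t ht
    have hy := hf1 t ht
    have hy0 : (0:ℝ) < f t := by linarith
    rw [hFpos t ht]
    rw [show (1:ℝ) - 1/(f t)^2 = ((f t)^2-1)/(f t)^2 by field_simp]
    rw [Real.log_div (sq1pos hy).ne' (by positivity), Real.log_pow]
    push_cast
    ring
  have hF0 : F 0 = 0 := if_neg (lt_irrefl 0)
  -- continuity of F on Icc 0 x
  have hcF : ContinuousOn F (Icc 0 x) := by
    intro t ht
    rcases eq_or_lt_of_le ht.1 with h0 | h0
    · rw [ContinuousWithinAt, ← h0, hF0]
      have hsub : Icc (0:ℝ) x ⊆ insert 0 (Ioi 0) := by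
        intro s hs
        rcases eq_or_lt_of_le hs.1 with h | h
        · exact mem_insert_iff.2 (Or.inl h.symm)
        · exact mem_insert_iff.2 (Or.inr h)
      apply Filter.Tendsto.mono_left _ (nhdsWithin_mono _ hsub)
      rw [nhdsWithin_insert, Filter.tendsto_sup]
      constructor
      · simpa [hF0] using tendsto_pure_nhds F 0
      · have hG : Filter.Tendsto (fun u : ℝ => -(1/2) * Real.log (1 - 1/u^2))
            Filter.atTop (nhds 0) := by
          have h1 : Filter.Tendsto (fun u : ℝ => 1 - 1/u^2) Filter.atTop (nhds 1) := by
            have h0 : Filter.Tendsto (fun u : ℝ => 1/u^2) Filter.atTop (nhds 0) := by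
              simpa using (tendsto_inv_atTop_zero.pow 2 : Filter.Tendsto (fun u : ℝ => (u⁻¹)^2)
                Filter.atTop (nhds (0^2)))
            simpa using (tendsto_const_nhds (x := (1:ℝ))).sub h0
          have h2 : Filter.Tendsto (fun v : ℝ => Real.log v) (nhds 1) (nhds 0) := by
            simpa using (Real.continuousAt_log one_ne_zero).tendsto
          have := (h2.comp h1).const_mul (-(1/2) : ℝ)
          simpa using this
        have := hG.comp hftop
        apply this.congr'
        filter_upwards [self_mem_nhdsWithin] with s hs
        exact (hFalt s hs).symm
    · have hct : ContinuousAt F t := by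
        have hy := hf1 t h0
        have hy0 : (0:ℝ) < f t := by linarith
        have hformula : ContinuousAt
            (fun u => Real.log (f u) - (1/2) * Real.log ((f u)^2 - 1)) t := by
          apply ContinuousAt.sub
          · exact (hcont t h0).log hy0.ne'
          · exact continuousAt_const.mul
              ((((hcont t h0).pow 2).sub continuousAt_const).log (sq1pos hy).ne')
        apply hformula.congr
        filter_upwards [Ioi_mem_nhds h0] with s hs
        exact (hFpos s hs).symm
      exact hct.continuousWithinAt
  -- interval integrability of the integrand
  have hfx1 : 1 < f x := hf1 x hx
  have hmain_int : IntervalIntegrable (fun t => deriv gFun (f t) / t) volume 0 x := by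
    rw [intervalIntegrable_iff_integrableOn_Ioc_of_le hx.le]
    set φ : ℝ → ℝ := fun t => (hAux (f t))^2 / (Real.pi * Real.sqrt ((f t)^2 - 1)^3) with hφ
    have hfc : ContinuousOn f (Ioc 0 x) := fun t ht => (hcont t ht.1).continuousWithinAt
    have hφcont : ContinuousOn φ (Ioc 0 x) := by
      apply ContinuousOn.div
      · exact (hAux_cont.comp hfc (fun t ht => (hf1 t ht.1).le)).pow 2
      · exact continuousOn_const.mul
          ((Real.continuous_sqrt.comp_continuousOn ((hfc.pow 2).sub continuousOn_const)).pow 3)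
      · intro t ht
        have h1 := spos (hf1 t ht.1)
        positivity
    have hboundval : (0:ℝ) < Real.pi * Real.sqrt ((f x)^2 - 1) := by
      have := spos hfx1
      positivity
    have hbound : ∀ᵐ t ∂(volume.restrict (Ioc 0 x)),
        ‖φ t‖ ≤ 1 / (Real.pi * Real.sqrt ((f x)^2 - 1)) := by
      rw [MeasureTheory.ae_restrict_iff' measurableSet_Ioc]
      apply MeasureTheory.ae_of_all
      intro t ht
      have hy := hf1 t ht.1
      have hs := spos hy
      have hh := hAux_pos hy
      have hπ := Real.pi_pos
      have hφnn : (0:ℝ) ≤ φ t := by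
        rw [hφ]
        positivity
      rw [Real.norm_eq_abs, abs_of_nonneg hφnn, hφ]
      have hle : hAux (f t) ≤ Real.sqrt ((f t)^2 - 1) := by
        unfold hAux
        have := Real.arccos_nonneg (1 / f t)
        linarith
      have hfxt : f x ≤ f t := by
        rcases eq_or_lt_of_le ht.2 with h | h
        · rw [h]
        · exact (hanti t x ht.1 h).le
      have hsx : Real.sqrt ((f x)^2-1) ≤ Real.sqrt ((f t)^2-1) := by
        apply Real.sqrt_le_sqrt
        nlinarith
      have hsxpos := spos hfx1
      rw [div_le_div_iff₀ (by positivity) (by positivity)]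
      nlinarith [mul_pos hs hs, mul_nonneg (mul_nonneg hh.le hh.le) hsxpos.le,
        mul_le_mul_of_nonneg_right (mul_le_mul hle hle hh.le hs.le)
          hsxpos.le,
        mul_le_mul_of_nonneg_left hsx (mul_pos hs hs).le]
    have hφint : IntegrableOn φ (Ioc 0 x) volume :=
      ⟨hφcont.aestronglyMeasurable measurableSet_Ioc,
        MeasureTheory.HasFiniteIntegral.restrict_of_bounded _ measure_Ioc_lt_top hbound⟩
    apply hφint.congr_fun ?_ measurableSet_Ioc
    intro t ht
    have hy := hf1 t ht.1
    have hs := spos hy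
    have hh := hAux_pos hy
    have hπ := Real.pi_pos
    rw [hφ]
    simp only
    rw [deriv_gFun hy]
    set y := f t with hy_def
    have ht_eq : t = Real.pi / hAux y := by rw [← hfσ t ht.1, sigmaF_eq_pi_div]
    rw [ht_eq]
    field_simp
  -- FTC
  have hFTC := intervalIntegral.integral_eq_sub_of_hasDeriv_right_of_le hx.le hcF
    (fun t ht => (hFd t ht).hasDerivWithinAt) hmain_int
  have hint_eq : (∫ t in (0:ℝ)..x, deriv gFun (f t) / t)
      = Real.log (f x) - (1/2) * Real.log ((f x)^2 - 1) := by
    rw [hFTC, hFpos x hx, hF0, sub_zero]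
  refine ⟨hint_eq, ?_⟩
  rw [hint_eq]
  have hb : (0:ℝ) < (f x)^2 - 1 := sq1pos hfx1
  rw [Real.exp_sub, Real.exp_log (by linarith : (0:ℝ) < f x)]
  congr 1
  rw [Real.sqrt_eq_rpow, Real.rpow_def_of_pos hb, mul_comm]
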